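/- Let G be a finite connected simple graph, let σ be an automorphism of G, and let F be a subset of V(G) such that the five sets F, σ(F), σ²(F), σ³(F), σ⁴(F) form a partition of V(G). Then for every natural number λ, D_λ(F, V(G)) = D_λ(F,F) + 2·D_λ(F,σ(F)) + 2·D_λ(F,σ²(F)). -/
import Mathlib


/-- `D_λ(F, K) = Σ_{u∈F} Σ_{v∈K} d_G(u,v)^λ`. -/
noncomputable def Dl {V : Type*} (G : SimpleGraph V) (l : ℕ) (F K : Finset V) : ℕ :=
  ∑ u ∈ F, ∑ v ∈ K, G.dist u v ^ l

lemma iso_dist_le {V : Type*} (G : SimpleGraph V) (hG : G.Connected) (σ : G ≃g G)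
    (u v : V) : G.dist (σ u) (σ v) ≤ G.dist u v := by
  obtain ⟨p, hp⟩ := hG.exists_walk_length_eq_dist u v
  calc G.dist (σ u) (σ v) ≤ (p.map σ.toHom).length := SimpleGraph.dist_le _
    _ = G.dist u v := by rw [SimpleGraph.Walk.length_map, hp]

lemma iso_dist_eq {V : Type*} (G : SimpleGraph V) (hG : G.Connected) (σ : G ≃g G)
    (u v : V) : G.dist (σ u) (σ v) = G.dist u v := by
  refine le_antisymm (iso_dist_le G hG σ u v) ?_
  have := iso_dist_le G hG σ.symm (σ u) (σ v)
  simpa using this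

lemma Dl_image {V : Type*} [DecidableEq V] (G : SimpleGraph V) (hG : G.Connected)
    (σ : G ≃g G) (l : ℕ) (A B : Finset V) :
    Dl G l (A.image ⇑σ) (B.image ⇑σ) = Dl G l A B := by
  unfold Dl
  rw [Finset.sum_image (fun a _ b _ h => σ.injective h)]
  refine Finset.sum_congr rfl fun u _ => ?_
  rw [Finset.sum_image (fun a _ b _ h => σ.injective h)]
  exact Finset.sum_congr rfl fun v _ => by rw [iso_dist_eq G hG]

lemma Dl_comm {V : Type*} (G : SimpleGraph V) (l : ℕ) (A B : Finset V) :
    Dl G l A B = Dl G l B A := by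
  unfold Dl
  rw [Finset.sum_comm]
  exact Finset.sum_congr rfl fun u _ => Finset.sum_congr rfl fun v _ => by
    rw [SimpleGraph.dist_comm]

/-- If `σ` is an automorphism of a finite connected simple graph `G` and
`F, σ(F), σ²(F), σ³(F), σ⁴(F)` partition the vertex set, then
`D_λ(F, V(G)) = D_λ(F,F) + 2·D_λ(F,σ(F)) + 2·D_λ(F,σ²(F))`. -/
theorem stmt11 {V : Type*} [Fintype V] [DecidableEq V]
    (G : SimpleGraph V) (hG : G.Connected) (σ : G ≃g G) (F : Finset V)
    (hdisj : ∀ i j : Fin 5, i ≠ j →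
      Disjoint (F.image ((⇑σ)^[(i : ℕ)])) (F.image ((⇑σ)^[(j : ℕ)])))
    (hcover : Finset.univ.biUnion (fun i : Fin 5 => F.image ((⇑σ)^[(i : ℕ)])) = Finset.univ)
    (l : ℕ) :
    Dl G l F Finset.univ =
      Dl G l F F + 2 * Dl G l F (F.image ⇑σ) + 2 * Dl G l F (F.image ((⇑σ)^[2])) := by
  -- image composition lemma
  have himg : ∀ (A : Finset V) (m : ℕ), (A.image ((⇑σ)^[m])).image ⇑σ = A.image ((⇑σ)^[m+1]) := by
    intro A m
    rw [Finset.image_image]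
    exact Finset.image_congr fun x _ => (Function.iterate_succ_apply' (⇑σ) m x).symm
  -- σ⁵ F = F
  have h5 : F.image ((⇑σ)^[5]) = F := by
    have hsub : F.image ((⇑σ)^[5]) ⊆ F := by
      intro x hx
      have hxu : x ∈ Finset.univ.biUnion (fun i : Fin 5 => F.image ((⇑σ)^[(i : ℕ)])) := by
        rw [hcover]; exact Finset.mem_univ x
      rw [Finset.mem_biUnion] at hxu
      obtain ⟨i, _, hi⟩ := hxu
      by_cases h0 : (i : ℕ) = 0
      · rw [h0] at hi; simpa using hi
      · exfalso
        obtain ⟨k, hk⟩ : ∃ k, (i : ℕ) = k + 1 := ⟨(i : ℕ) - 1, by omega⟩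
        have hk4 : k < 4 := by have := i.isLt; omega
        rw [hk] at hi
        obtain ⟨a, haF, hax⟩ := Finset.mem_image.mp hx
        obtain ⟨b, hbF, hbx⟩ := Finset.mem_image.mp hi
        have h1 : x = σ ((⇑σ)^[4] a) := by
          rw [← hax]; exact (Function.iterate_succ_apply' (⇑σ) 4 a)
        have h2 : x = σ ((⇑σ)^[k] b) := by
          rw [← hbx]; exact (Function.iterate_succ_apply' (⇑σ) k b)
        have heq : (⇑σ)^[4] a = (⇑σ)^[k] b := σ.injective (h1 ▸ h2)
        have hj4 : (⟨4, by norm_num⟩ : Fin 5) ≠ (⟨k, by omega⟩ : Fin 5) := by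
          intro hc
          have : (4 : ℕ) = k := congrArg Fin.val hc
          omega
        have hd := hdisj ⟨4, by norm_num⟩ ⟨k, by omega⟩ hj4
        simp only at hd
        have hm1 : (⇑σ)^[4] a ∈ F.image ((⇑σ)^[4]) := Finset.mem_image_of_mem _ haF
        have hm2 : (⇑σ)^[4] a ∈ F.image ((⇑σ)^[k]) := by
          rw [heq]; exact Finset.mem_image_of_mem _ hbF
        exact Finset.disjoint_left.mp hd hm1 hm2
    have hcard : (F.image ((⇑σ)^[5])).card = F.card :=
      Finset.card_image_of_injective _ (σ.toEquiv.injective.iterate 5)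
    exact Finset.eq_of_subset_of_card_le hsub (le_of_eq hcard.symm)
  -- split the sum over univ
  have hsplit : Dl G l F Finset.univ = ∑ i : Fin 5, Dl G l F (F.image ((⇑σ)^[(i:ℕ)])) := by
    unfold Dl
    rw [← hcover]
    calc ∑ u ∈ F, ∑ v ∈ Finset.univ.biUnion (fun i : Fin 5 => F.image ((⇑σ)^[(i:ℕ)])), G.dist u v ^ l
        = ∑ u ∈ F, ∑ i : Fin 5, ∑ v ∈ F.image ((⇑σ)^[(i:ℕ)]), G.dist u v ^ l :=
          Finset.sum_congr rfl fun u _ =>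
            Finset.sum_biUnion (fun i _ j _ hij => hdisj i j hij)
      _ = ∑ i : Fin 5, ∑ u ∈ F, ∑ v ∈ F.image ((⇑σ)^[(i:ℕ)]), G.dist u v ^ l := Finset.sum_comm
  -- key identities
  have key : ∀ a b : ℕ, Dl G l (F.image ((⇑σ)^[a])) (F.image ((⇑σ)^[b]))
      = Dl G l (F.image ((⇑σ)^[a+1])) (F.image ((⇑σ)^[b+1])) := by
    intro a b
    rw [← himg F a, ← himg F b, Dl_image G hG]
  have h3 : Dl G l F (F.image ((⇑σ)^[3])) = Dl G l F (F.image ((⇑σ)^[2])) := by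
    have h0 : F = F.image ((⇑σ)^[0]) := by simp
    calc Dl G l F (F.image ((⇑σ)^[3]))
        = Dl G l (F.image ((⇑σ)^[0])) (F.image ((⇑σ)^[3])) := by rw [← h0]
      _ = Dl G l (F.image ((⇑σ)^[2])) (F.image ((⇑σ)^[5])) := by
          rw [key 0 3, key 1 4]
      _ = Dl G l (F.image ((⇑σ)^[2])) F := by rw [h5]
      _ = Dl G l F (F.image ((⇑σ)^[2])) := Dl_comm G l _ _
  have h4 : Dl G l F (F.image ((⇑σ)^[4])) = Dl G l F (F.image ((⇑σ)^[1])) := by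
    have h0 : F = F.image ((⇑σ)^[0]) := by simp
    calc Dl G l F (F.image ((⇑σ)^[4]))
        = Dl G l (F.image ((⇑σ)^[0])) (F.image ((⇑σ)^[4])) := by rw [← h0]
      _ = Dl G l (F.image ((⇑σ)^[1])) (F.image ((⇑σ)^[5])) := by rw [key 0 4]
      _ = Dl G l (F.image ((⇑σ)^[1])) F := by rw [h5]
      _ = Dl G l F (F.image ((⇑σ)^[1])) := Dl_comm G l _ _
  rw [hsplit, Fin.sum_univ_five]
  simp only [Fin.val_zero, Fin.val_one, Fin.val_two]
  have e0 : F.image ((⇑σ)^[0]) = F := by simp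
  have e1 : (⇑σ)^[1] = ⇑σ := Function.iterate_one _
  have h3' : ((3 : Fin 5) : ℕ) = 3 := rfl
  have h4' : ((4 : Fin 5) : ℕ) = 4 := rfl
  rw [e0, e1, h3', h4', h3, h4, e1]
  ring
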